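/- Caccioppoli-type inequality: if Hφ = μφ on ℓ²(M) and u solves Hu = 1, then for any g ∈ ℓ²(M), Σ_{n∈M} (1/u_n - μ) φ_n² g_n² ≤ (1/2) Σ_{n∈M} φ_n² Σ_{|m-n|_1=1} (g_m - g_n)². -/

import Mathlib

open Finset Real

noncomputable section

/-- The `i`-th standard basis vector in the discrete torus `(ZMod K)^d`. -/
def e (d K : ℕ) (i : Fin d) : Fin d → ZMod K :=
  fun j => if j = i then 1 else 0

/-- The periodic discrete Schrödinger operator `H = -Δ + V` on `(ZMod K)^d`:
`(Hφ)_n = -∑_{|m-n|₁=1}(φ_m - φ_n) + v_n φ_n`. -/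
def opH (d K : ℕ) (v φ : (Fin d → ZMod K) → ℝ) (n : Fin d → ZMod K) : ℝ :=
  (∑ i : Fin d, (2 * φ n - φ (n + e d K i) - φ (n - e d K i))) + v n * φ n

lemma sum_shift {d K : ℕ} [NeZero K] (F : (Fin d → ZMod K) → ℝ) (a : Fin d → ZMod K) :
    ∑ n : Fin d → ZMod K, F (n + a) = ∑ n : Fin d → ZMod K, F n :=
  Fintype.sum_bijective (fun n => n + a) (Equiv.addRight a).bijective _ _ (fun _ => rfl)

lemma qform {d K : ℕ} [NeZero K] (v f h : (Fin d → ZMod K) → ℝ) :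
    ∑ n : Fin d → ZMod K, opH d K v f n * h n =
      (∑ n : Fin d → ZMod K, ∑ i : Fin d,
        (f n - f (n + e d K i)) * (h n - h (n + e d K i))) +
      ∑ n : Fin d → ZMod K, v n * f n * h n := by
  have key : ∀ i : Fin d,
      ∑ n : Fin d → ZMod K, (f n - f (n - e d K i)) * h n
        = ∑ n : Fin d → ZMod K, (f (n + e d K i) - f n) * h (n + e d K i) := by
    intro i
    rw [← sum_shift (fun n => (f n - f (n - e d K i)) * h n) (e d K i)]
    simp [add_sub_cancel_right]
  have expand : ∀ n : Fin d → ZMod K, opH d K v f n * h n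
      = (∑ i : Fin d, ((f n - f (n + e d K i)) * h n + (f n - f (n - e d K i)) * h n))
        + v n * f n * h n := by
    intro n
    simp only [opH, add_mul, Finset.sum_mul]
    congr 1
    · exact Finset.sum_congr rfl fun i _ => by ring
  calc ∑ n : Fin d → ZMod K, opH d K v f n * h n
      = ∑ n : Fin d → ZMod K,
          ((∑ i : Fin d, ((f n - f (n + e d K i)) * h n + (f n - f (n - e d K i)) * h n))
            + v n * f n * h n) := Finset.sum_congr rfl fun n _ => expand n
    _ = (∑ i : Fin d, ∑ n : Fin d → ZMod K,
          ((f n - f (n + e d K i)) * h n + (f n - f (n - e d K i)) * h n))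
          + ∑ n : Fin d → ZMod K, v n * f n * h n := by
        rw [Finset.sum_add_distrib, Finset.sum_comm]
    _ = (∑ i : Fin d, ∑ n : Fin d → ZMod K,
          (f n - f (n + e d K i)) * (h n - h (n + e d K i)))
          + ∑ n : Fin d → ZMod K, v n * f n * h n := by
        congr 1
        refine Finset.sum_congr rfl fun i _ => ?_
        rw [Finset.sum_add_distrib, key i, ← Finset.sum_add_distrib]
        exact Finset.sum_congr rfl fun n _ => by ring
    _ = _ := by rw [Finset.sum_comm]

lemma edge_bound (x y p q s t : ℝ) (hx : 0 < x) (hy : 0 < y) :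
    (x - y) * (p^2*s^2/x - q^2*t^2/y) - (p - q) * (p*s^2 - q*t^2)
      ≤ (1/2) * (p^2 + q^2) * (t - s)^2 := by
  have h : (1/2) * (p^2+q^2) * (t-s)^2
      - ((x - y) * (p^2*s^2/x - q^2*t^2/y) - (p - q) * (p*s^2 - q*t^2))
      = (1/2)*((p-q)*(t-s))^2 + (y*p*s - x*q*t)^2/(x*y) := by
    field_simp
    ring
  nlinarith [sq_nonneg ((p-q)*(t-s)), div_nonneg (sq_nonneg (y*p*s - x*q*t)) (mul_pos hx hy).le]

/-- Caccioppoli-type inequality: if `Hφ = μφ` and `Hu = 1`, then for any `g`,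
`∑(1/u_n - μ)φ_n²g_n² ≤ (1/2)∑ φ_n² ∑_{|m-n|₁=1}(g_m - g_n)²`. -/
theorem caccioppoli_inequality (d K : ℕ) [NeZero K] (hK : 3 ≤ K)
    (v : (Fin d → ZMod K) → ℝ) (hv : ∀ n, 0 ≤ v n) (hv0 : ∃ n, v n ≠ 0)
    (u : (Fin d → ZMod K) → ℝ) (hupos : ∀ n, 0 < u n)
    (hu : ∀ n, opH d K v u n = 1)
    (μ : ℝ) (φ : (Fin d → ZMod K) → ℝ) (hφ : φ ≠ 0)
    (heig : ∀ n, opH d K v φ n = μ * φ n)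
    (g : (Fin d → ZMod K) → ℝ) :
    ∑ n : Fin d → ZMod K, (1 / u n - μ) * (φ n) ^ 2 * (g n) ^ 2 ≤
      (1 / 2) * ∑ n : Fin d → ZMod K, (φ n) ^ 2 *
        ∑ i : Fin d,
          ((g (n + e d K i) - g n) ^ 2 + (g (n - e d K i) - g n) ^ 2) := by
  classical
  set w : (Fin d → ZMod K) → ℝ := fun n => φ n ^ 2 * g n ^ 2 / u n with hw
  set ψ : (Fin d → ZMod K) → ℝ := fun n => φ n * g n ^ 2 with hψ
  have step1 : ∑ n : Fin d → ZMod K, (1 / u n - μ) * (φ n) ^ 2 * (g n) ^ 2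
      = ∑ n : Fin d → ZMod K, opH d K v u n * w n
        - ∑ n : Fin d → ZMod K, opH d K v φ n * ψ n := by
    rw [← Finset.sum_sub_distrib]
    refine Finset.sum_congr rfl fun n _ => ?_
    rw [hu n, heig n]
    have h0 := (hupos n).ne'
    simp only [hw, hψ]
    field_simp
  have hveq : ∑ n : Fin d → ZMod K, v n * u n * w n
      = ∑ n : Fin d → ZMod K, v n * φ n * ψ n := by
    refine Finset.sum_congr rfl fun n _ => ?_
    have h0 := (hupos n).ne'
    simp only [hw, hψ]
    field_simp
  have step2 : ∑ n : Fin d → ZMod K, (1 / u n - μ) * (φ n) ^ 2 * (g n) ^ 2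
      = ∑ n : Fin d → ZMod K, ∑ i : Fin d,
          ((u n - u (n + e d K i)) * (w n - w (n + e d K i))
            - (φ n - φ (n + e d K i)) * (ψ n - ψ (n + e d K i))) := by
    rw [step1, qform v u w, qform v φ ψ, hveq, add_sub_add_right_eq_sub,
      ← Finset.sum_sub_distrib]
    exact Finset.sum_congr rfl fun n _ => (Finset.sum_sub_distrib _ _).symm
  have shift : ∀ i : Fin d,
      ∑ n : Fin d → ZMod K, (1:ℝ)/2 * (φ n ^ 2 * (g (n - e d K i) - g n) ^ 2)
        = ∑ n : Fin d → ZMod K,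
            (1:ℝ)/2 * (φ (n + e d K i) ^ 2 * (g (n + e d K i) - g n) ^ 2) := by
    intro i
    rw [← sum_shift (fun n => (1:ℝ)/2 * (φ n ^ 2 * (g (n - e d K i) - g n) ^ 2)) (e d K i)]
    refine Finset.sum_congr rfl fun n _ => ?_
    rw [add_sub_cancel_right]
    ring
  have step3 : (1 / 2) * ∑ n : Fin d → ZMod K, (φ n) ^ 2 *
        ∑ i : Fin d,
          ((g (n + e d K i) - g n) ^ 2 + (g (n - e d K i) - g n) ^ 2)
      = ∑ n : Fin d → ZMod K, ∑ i : Fin d,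
          (1:ℝ)/2 * (φ n ^ 2 + φ (n + e d K i) ^ 2) * (g (n + e d K i) - g n) ^ 2 := by
    rw [Finset.mul_sum]
    calc ∑ n : Fin d → ZMod K, (1:ℝ)/2 * ((φ n) ^ 2 *
            ∑ i : Fin d, ((g (n + e d K i) - g n) ^ 2 + (g (n - e d K i) - g n) ^ 2))
        = (∑ n : Fin d → ZMod K, ∑ i : Fin d,
              (1:ℝ)/2 * (φ n ^ 2 * (g (n + e d K i) - g n) ^ 2))
          + ∑ n : Fin d → ZMod K, ∑ i : Fin d,
              (1:ℝ)/2 * (φ n ^ 2 * (g (n - e d K i) - g n) ^ 2) := by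
          rw [← Finset.sum_add_distrib]
          refine Finset.sum_congr rfl fun n _ => ?_
          simp only [Finset.mul_sum]
          rw [← Finset.sum_add_distrib]
          exact Finset.sum_congr rfl fun i _ => by ring
      _ = (∑ i : Fin d, ∑ n : Fin d → ZMod K,
              (1:ℝ)/2 * (φ n ^ 2 * (g (n + e d K i) - g n) ^ 2))
          + ∑ i : Fin d, ∑ n : Fin d → ZMod K,
              (1:ℝ)/2 * (φ (n + e d K i) ^ 2 * (g (n + e d K i) - g n) ^ 2) := by
          rw [Finset.sum_comm]
          congr 1
          rw [Finset.sum_comm]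
          exact Finset.sum_congr rfl fun i _ => shift i
      _ = ∑ i : Fin d, ∑ n : Fin d → ZMod K,
            (1:ℝ)/2 * (φ n ^ 2 + φ (n + e d K i) ^ 2) * (g (n + e d K i) - g n) ^ 2 := by
          rw [← Finset.sum_add_distrib]
          refine Finset.sum_congr rfl fun i _ => ?_
          rw [← Finset.sum_add_distrib]
          exact Finset.sum_congr rfl fun n _ => by ring
      _ = _ := by rw [Finset.sum_comm]
  rw [step2, step3]
  refine Finset.sum_le_sum fun n _ => Finset.sum_le_sum fun i _ => ?_
  simpa [hw, hψ] using edge_bound (u n) (u (n + e d K i)) (φ n) (φ (n + e d K i))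
    (g n) (g (n + e d K i)) (hupos n) (hupos (n + e d K i))
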